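/- For a > 0, c > b > 0, p, q ≥ 0, and real z with |z| < 1, the (p,q)-extended Gauss hypergeometric function satisfies |F_{p,q}(a, b; c; z)| ≤ exp(-(√p + √q)²) · ₂F₁(a, b; c; |z|). -/

import Mathlib

open Real MeasureTheory

/-- The (p,q)-extended Beta function. -/
noncomputable def pqBeta (x y p q : ℝ) : ℝ :=
  ∫ t in (0:ℝ)..1, t ^ (x - 1) * (1 - t) ^ (y - 1) * Real.exp (-p / t - q / (1 - t))

/-- The (p,q)-extended Gauss hypergeometric function, series definition. -/
noncomputable def pqGauss (a b c z p q : ℝ) : ℝ :=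
  ∑' n : ℕ, (ascPochhammer ℝ n).eval a *
    (pqBeta (b + n) (c - b) p q / pqBeta b (c - b) 0 0) * z ^ n / n.factorial

/-- The Gaussian hypergeometric series. -/
noncomputable def twoF1 (a b c z : ℝ) : ℝ :=
  ∑' n : ℕ, (ascPochhammer ℝ n).eval a * (ascPochhammer ℝ n).eval b /
    (ascPochhammer ℝ n).eval c * z ^ n / n.factorial

-- integrability of classical beta integrand
lemma betaIntegrand_int (x y : ℝ) (hx : 0 < x) (hy : 0 < y) :
    IntegrableOn (fun t : ℝ => t ^ (x-1) * (1-t) ^ (y-1)) (Set.Ioc 0 1) volume := by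
  have hI : IntervalIntegrable (fun t : ℝ => (t : ℂ) ^ ((x : ℂ) - 1) * (1 - (t : ℂ)) ^ ((y : ℂ) - 1)) volume 0 1 :=
    Complex.betaIntegral_convergent (by simpa using hx) (by simpa using hy)
  have heq : Set.EqOn (fun t : ℝ => ((t : ℂ) ^ ((x : ℂ) - 1) * (1 - (t : ℂ)) ^ ((y : ℂ) - 1)).re)
      (fun t : ℝ => t ^ (x - 1) * (1 - t) ^ (y - 1)) (Set.Ioc 0 1) := by
    intro t ht
    have h0 : (0:ℝ) ≤ t := le_of_lt ht.1
    have h1 : (0:ℝ) ≤ 1 - t := by linarith [ht.2]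
    simp only
    rw [show ((x:ℂ)-1) = ((x-1 : ℝ) : ℂ) by push_cast; ring,
        show ((y:ℂ)-1) = ((y-1 : ℝ) : ℂ) by push_cast; ring,
        show (1 - (t:ℂ)) = ((1 - t : ℝ) : ℂ) by push_cast; ring,
        ← Complex.ofReal_cpow h0, ← Complex.ofReal_cpow h1, ← Complex.ofReal_mul,
        Complex.ofReal_re]
  have h3 := hI.1.re
  simp only [RCLike.re_to_complex] at h3
  exact MeasureTheory.IntegrableOn.congr_fun h3 heq measurableSet_Ioc

-- integrability of the pq integrand
lemma pqIntegrand_int (x y p q : ℝ) (hx : 0 < x) (hy : 0 < y) (hp : 0 ≤ p) (hq : 0 ≤ q) :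
    IntegrableOn (fun t : ℝ => t ^ (x-1) * (1-t) ^ (y-1) * Real.exp (-p / t - q / (1 - t)))
      (Set.Ioc 0 1) volume := by
  apply (betaIntegrand_int x y hx hy).mono'
  · apply Measurable.aestronglyMeasurable
    fun_prop
  · rw [ae_restrict_iff' measurableSet_Ioc]
    filter_upwards with t ht
    have h0 : (0:ℝ) ≤ t := le_of_lt ht.1
    have h1 : (0:ℝ) ≤ 1 - t := by linarith [ht.2]
    have hb : t ^ (x-1) * (1-t) ^ (y-1) * Real.exp (-p / t - q / (1 - t))
        ≤ t ^ (x-1) * (1-t) ^ (y-1) * 1 := by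
      apply mul_le_mul_of_nonneg_left _ (by positivity)
      rw [Real.exp_le_one_iff]
      have h2 : 0 ≤ p / t := div_nonneg hp h0
      have h3 : 0 ≤ q / (1-t) := div_nonneg hq h1
      have h4 : -p / t = -(p / t) := by ring
      linarith
    rw [Real.norm_eq_abs, abs_of_nonneg (by positivity)]
    linarith

lemma pqBeta_nonneg (x y p q : ℝ) : 0 ≤ pqBeta x y p q := by
  rw [pqBeta]
  apply intervalIntegral.integral_nonneg zero_le_one
  intro t ht
  have h0 : (0:ℝ) ≤ t := ht.1
  have h1 : (0:ℝ) ≤ 1 - t := by linarith [ht.2]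
  positivity

lemma pqBeta_zero (x y : ℝ) (hx : 0 < x) (hy : 0 < y) :
    pqBeta x y 0 0 = Real.Gamma x * Real.Gamma y / Real.Gamma (x + y) := by
  have h0 : pqBeta x y 0 0 = ∫ t in Set.Ioc (0:ℝ) 1, t ^ (x-1) * (1-t) ^ (y-1) := by
    rw [pqBeta, intervalIntegral.integral_of_le zero_le_one]
    simp
  have hI : IntervalIntegrable (fun t : ℝ => (t : ℂ) ^ ((x : ℂ) - 1) * (1 - (t : ℂ)) ^ ((y : ℂ) - 1)) volume 0 1 :=
    Complex.betaIntegral_convergent (by simpa using hx) (by simpa using hy)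
  have heq : Set.EqOn (fun t : ℝ => ((t : ℂ) ^ ((x : ℂ) - 1) * (1 - (t : ℂ)) ^ ((y : ℂ) - 1)).re)
      (fun t : ℝ => t ^ (x - 1) * (1 - t) ^ (y - 1)) (Set.Ioc 0 1) := by
    intro t ht
    have h0 : (0:ℝ) ≤ t := le_of_lt ht.1
    have h1 : (0:ℝ) ≤ 1 - t := by linarith [ht.2]
    simp only
    rw [show ((x:ℂ)-1) = ((x-1 : ℝ) : ℂ) by push_cast; ring,
        show ((y:ℂ)-1) = ((y-1 : ℝ) : ℂ) by push_cast; ring,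
        show (1 - (t:ℂ)) = ((1 - t : ℝ) : ℂ) by push_cast; ring,
        ← Complex.ofReal_cpow h0, ← Complex.ofReal_cpow h1, ← Complex.ofReal_mul,
        Complex.ofReal_re]
  have h2 : (∫ t in Set.Ioc (0:ℝ) 1, t ^ (x-1) * (1-t) ^ (y-1))
      = (Complex.betaIntegral x y).re := by
    rw [← setIntegral_congr_fun measurableSet_Ioc heq]
    have := integral_re (μ := volume.restrict (Set.Ioc (0:ℝ) 1)) hI.1
    simp only [RCLike.re_to_complex] at this
    rw [this, Complex.betaIntegral, intervalIntegral.integral_of_le zero_le_one]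
  have hx' : 0 < (x:ℂ).re := by simpa using hx
  have hy' : 0 < (y:ℂ).re := by simpa using hy
  have hG := Complex.Gamma_mul_Gamma_eq_betaIntegral hx' hy'
  have hne : Complex.Gamma ((x:ℂ)+(y:ℂ)) ≠ 0 :=
    Complex.Gamma_ne_zero_of_re_pos (by simpa using add_pos hx hy)
  have hbeta : Complex.betaIntegral x y
      = Complex.Gamma x * Complex.Gamma y / Complex.Gamma ((x:ℂ)+(y:ℂ)) := by
    rw [eq_div_iff hne]; linear_combination -hG
  rw [h0, h2, hbeta, show ((x:ℂ)+(y:ℂ)) = ((x+y:ℝ):ℂ) by push_cast; ring,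
     Complex.Gamma_ofReal, Complex.Gamma_ofReal, Complex.Gamma_ofReal,
     ← Complex.ofReal_mul, ← Complex.ofReal_div, Complex.ofReal_re]

-- key exponential bound
lemma pqBeta_le (x y p q : ℝ) (hx : 0 < x) (hy : 0 < y) (hp : 0 ≤ p) (hq : 0 ≤ q) :
    pqBeta x y p q ≤ Real.exp (-(Real.sqrt p + Real.sqrt q) ^ 2) * pqBeta x y 0 0 := by
  set E := Real.exp (-(Real.sqrt p + Real.sqrt q) ^ 2) with hE
  have hfi := pqIntegrand_int x y p q hx hy hp hq
  have hgi := betaIntegrand_int x y hx hy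
  have hL : pqBeta x y p q
      = ∫ t in Set.Ioo (0:ℝ) 1, t ^ (x-1) * (1-t) ^ (y-1) * Real.exp (-p / t - q / (1 - t)) := by
    rw [pqBeta, intervalIntegral.integral_of_le zero_le_one, integral_Ioc_eq_integral_Ioo]
  have hR : pqBeta x y 0 0 = ∫ t in Set.Ioo (0:ℝ) 1, t ^ (x-1) * (1-t) ^ (y-1) := by
    rw [pqBeta, intervalIntegral.integral_of_le zero_le_one, integral_Ioc_eq_integral_Ioo]
    simp
  rw [hL, hR, ← integral_const_mul]
  apply setIntegral_mono_on (hfi.mono_set Set.Ioo_subset_Ioc_self)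
    ((hgi.mono_set Set.Ioo_subset_Ioc_self).const_mul E) measurableSet_Ioo
  intro t ht
  have ht0 : (0:ℝ) < t := ht.1
  have ht1 : (0:ℝ) < 1 - t := by linarith [ht.2]
  have hexp : Real.exp (-p / t - q / (1 - t)) ≤ E := by
    rw [hE, Real.exp_le_exp]
    have hu := Real.sq_sqrt hp
    have hv := Real.sq_sqrt hq
    have hun := Real.sqrt_nonneg p
    have hvn := Real.sqrt_nonneg q
    set u := Real.sqrt p
    set v := Real.sqrt q
    have key : (u+v)^2 * (t*(1-t)) ≤ p*(1-t) + q*t := by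
      nlinarith [sq_nonneg (u*(1-t) - v*t)]
    have h1 : (u+v)^2 ≤ (p*(1-t) + q*t) / (t*(1-t)) := by
      rw [le_div_iff₀ (by positivity)]; exact key
    have h2 : p / t + q / (1-t) = (p*(1-t) + q*t) / (t*(1-t)) := by
      field_simp
    have : -p / t - q / (1-t) = -(p / t + q / (1-t)) := by ring
    rw [this, h2]
    linarith
  calc t ^ (x-1) * (1-t) ^ (y-1) * Real.exp (-p / t - q / (1 - t))
      ≤ t ^ (x-1) * (1-t) ^ (y-1) * E :=
        mul_le_mul_of_nonneg_left hexp (by positivity)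
    _ = E * (t ^ (x-1) * (1-t) ^ (y-1)) := by ring

lemma Gamma_add_nat (x : ℝ) (hx : 0 < x) (n : ℕ) :
    Real.Gamma (x + n) = (ascPochhammer ℝ n).eval x * Real.Gamma x := by
  induction n with
  | zero => simp
  | succ n ih =>
    have h1 : x + (n+1 : ℕ) = (x + n) + 1 := by push_cast; ring
    have h2 : x + (n : ℕ) ≠ 0 := by positivity
    rw [h1, Real.Gamma_add_one h2, ih, ascPochhammer_succ_eval]
    ring

theorem pqGauss_abs_le (a b c z p q : ℝ) (ha : 0 < a) (hb : 0 < b) (hcb : b < c)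
    (hp : 0 ≤ p) (hq : 0 ≤ q) (hz : |z| < 1) :
    |pqGauss a b c z p q| ≤
      Real.exp (-(Real.sqrt p + Real.sqrt q) ^ 2) * twoF1 a b c |z| := by
  have hz0 : (0:ℝ) ≤ |z| := abs_nonneg z
  set E := Real.exp (-(Real.sqrt p + Real.sqrt q) ^ 2) with hE
  have hEpos : 0 < E := Real.exp_pos _
  have hcpos : 0 < c := lt_trans hb hcb
  have hybpos : 0 < c - b := by linarith
  have hGb := Real.Gamma_pos_of_pos hb
  have hGcb := Real.Gamma_pos_of_pos hybpos
  have hGc := Real.Gamma_pos_of_pos hcpos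
  have hD : pqBeta b (c-b) 0 0 = Real.Gamma b * Real.Gamma (c-b) / Real.Gamma c := by
    have := pqBeta_zero b (c-b) hb hybpos
    rwa [show b + (c-b) = c from by ring] at this
  have hDpos : 0 < pqBeta b (c-b) 0 0 := by rw [hD]; positivity
  have hPa : ∀ n : ℕ, 0 < (ascPochhammer ℝ n).eval a := fun n => ascPochhammer_pos n a ha
  have hPb : ∀ n : ℕ, 0 < (ascPochhammer ℝ n).eval b := fun n => ascPochhammer_pos n b hb
  have hPc : ∀ n : ℕ, 0 < (ascPochhammer ℝ n).eval c := fun n => ascPochhammer_pos n c hcpos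
  have hPbc : ∀ n : ℕ, (ascPochhammer ℝ n).eval b ≤ (ascPochhammer ℝ n).eval c := by
    intro n
    induction n with
    | zero => simp
    | succ n ih =>
      rw [ascPochhammer_succ_eval, ascPochhammer_succ_eval]
      have h1 := hPb n
      apply mul_le_mul ih (by linarith) (by positivity) (hPc n).le
  have hratio : ∀ n : ℕ, pqBeta (b + n) (c-b) 0 0 / pqBeta b (c-b) 0 0
      = (ascPochhammer ℝ n).eval b / (ascPochhammer ℝ n).eval c := by
    intro n
    have hbn : (0:ℝ) < b + n := by positivity
    have h1 : pqBeta (b + n) (c - b) 0 0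
        = Real.Gamma (b + n) * Real.Gamma (c-b) / Real.Gamma (c + n) := by
      have := pqBeta_zero (b + n) (c-b) hbn hybpos
      rwa [show b + n + (c-b) = c + n from by ring] at this
    rw [h1, hD, Gamma_add_nat b hb n, Gamma_add_nat c hcpos n]
    have h2 := (hPc n).ne'
    have h3 := (hPb n).ne'
    field_simp
  set f : ℕ → ℝ := fun n => (ascPochhammer ℝ n).eval a *
    (pqBeta (b + n) (c - b) p q / pqBeta b (c - b) 0 0) * z ^ n / n.factorial with hf
  set g : ℕ → ℝ := fun n => (ascPochhammer ℝ n).eval a * (ascPochhammer ℝ n).eval b /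
    (ascPochhammer ℝ n).eval c * |z| ^ n / n.factorial with hg
  set h : ℕ → ℝ := fun n => (ascPochhammer ℝ n).eval a * |z| ^ n / n.factorial with hh
  have hhn : ∀ n, 0 ≤ h n := fun n =>
    div_nonneg (mul_nonneg (hPa n).le (pow_nonneg hz0 n)) (Nat.cast_nonneg _)
  have hsum_h : Summable h := by
    apply summable_of_ratio_norm_eventually_le (r := (1 + |z|)/2) (by linarith)
    have hδ : (0:ℝ) < (1 - |z|)/2 := by linarith
    rw [Filter.eventually_atTop]
    refine ⟨⌈a / ((1 - |z|)/2)⌉₊, fun n hn => ?_⟩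
    have hna : a ≤ (n:ℝ) * ((1 - |z|)/2) := by
      have h1 : a / ((1 - |z|)/2) ≤ (n:ℝ) := le_trans (Nat.le_ceil _) (by exact_mod_cast hn)
      rw [div_le_iff₀ hδ] at h1
      linarith
    have haz : a * |z| ≤ a := mul_le_of_le_one_right ha.le hz.le
    have hkey : (a + (n:ℝ)) * |z| ≤ (1 + |z|)/2 * ((n:ℝ) + 1) := by nlinarith
    rw [Real.norm_eq_abs, Real.norm_eq_abs, abs_of_nonneg (hhn _), abs_of_nonneg (hhn _)]
    have hfac : (0:ℝ) < n.factorial := by positivity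
    have hrec : h (n+1) = h n * ((a + (n:ℝ)) * |z| / ((n:ℝ) + 1)) := by
      simp only [hh, ascPochhammer_succ_eval, pow_succ, Nat.factorial_succ]
      push_cast
      field_simp
    rw [hrec]
    have h2 : (a + (n:ℝ)) * |z| / ((n:ℝ)+1) ≤ (1 + |z|)/2 := by
      rw [div_le_iff₀ (by positivity)]
      linarith
    calc h n * ((a + (n:ℝ)) * |z| / ((n:ℝ)+1)) ≤ h n * ((1 + |z|)/2) :=
          mul_le_mul_of_nonneg_left h2 (hhn n)
      _ = (1 + |z|)/2 * h n := by ring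
  have hgn : ∀ n, 0 ≤ g n := fun n =>
    div_nonneg (mul_nonneg (div_nonneg (mul_nonneg (hPa n).le (hPb n).le) (hPc n).le)
      (pow_nonneg hz0 n)) (Nat.cast_nonneg _)
  have hgh : ∀ n, g n ≤ h n := by
    intro n
    have h1 : (ascPochhammer ℝ n).eval a * (ascPochhammer ℝ n).eval b /
        (ascPochhammer ℝ n).eval c ≤ (ascPochhammer ℝ n).eval a := by
      rw [div_le_iff₀ (hPc n)]
      exact mul_le_mul_of_nonneg_left (hPbc n) (hPa n).le
    exact div_le_div_of_nonneg_right
      (mul_le_mul_of_nonneg_right h1 (pow_nonneg hz0 n)) (Nat.cast_nonneg _)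
  have hsum_g : Summable g := Summable.of_nonneg_of_le hgn hgh hsum_h
  have hfg : ∀ n, |f n| ≤ E * g n := by
    intro n
    have hβ := pqBeta_nonneg (b + n) (c - b) p q
    have h1 : |f n| = (ascPochhammer ℝ n).eval a *
        (pqBeta (b + n) (c - b) p q / pqBeta b (c - b) 0 0) * |z| ^ n / n.factorial := by
      simp only [hf]
      rw [abs_div, abs_mul, abs_mul, abs_pow, abs_of_nonneg (hPa n).le,
        abs_of_nonneg (div_nonneg hβ hDpos.le), Nat.abs_cast]
    have h3 : pqBeta (b + n) (c - b) p q ≤ E * pqBeta (b + n) (c - b) 0 0 :=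
      pqBeta_le (b + n) (c - b) p q (by positivity) hybpos hp hq
    have h2 : pqBeta (b + n) (c - b) p q / pqBeta b (c - b) 0 0
        ≤ E * ((ascPochhammer ℝ n).eval b / (ascPochhammer ℝ n).eval c) := by
      rw [← hratio n, ← mul_div_assoc]
      exact (div_le_div_iff_of_pos_right hDpos).mpr h3
    rw [h1]
    calc (ascPochhammer ℝ n).eval a *
        (pqBeta (b + n) (c - b) p q / pqBeta b (c - b) 0 0) * |z| ^ n / n.factorial
        ≤ (ascPochhammer ℝ n).eval a *
          (E * ((ascPochhammer ℝ n).eval b / (ascPochhammer ℝ n).eval c)) * |z| ^ n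
            / n.factorial := by
          apply div_le_div_of_nonneg_right ?_ (Nat.cast_nonneg _)
          exact mul_le_mul_of_nonneg_right
            (mul_le_mul_of_nonneg_left h2 (hPa n).le) (pow_nonneg hz0 n)
      _ = E * g n := by simp only [hg]; ring
  have hnorm : Summable (fun n => ‖f n‖) := by
    simp only [Real.norm_eq_abs]
    exact Summable.of_nonneg_of_le (fun n => abs_nonneg _) hfg (hsum_g.mul_left E)
  have habs : |pqGauss a b c z p q| ≤ ∑' n, ‖f n‖ := by
    rw [pqGauss, ← Real.norm_eq_abs]
    exact norm_tsum_le_tsum_norm hnorm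
  have h5 : (∑' n, ‖f n‖) ≤ ∑' n, E * g n := by
    apply hnorm.tsum_le_tsum _ (hsum_g.mul_left E)
    intro n
    rw [Real.norm_eq_abs]
    exact hfg n
  have h6 : (∑' n, E * g n) = E * twoF1 a b c |z| := by
    rw [tsum_mul_left, twoF1]
  linarith
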